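/- Let k ≥ 2. Then the series Σ_{i=1}^{∞} u_i·k^{−2i} converges and lim_{n→∞} M_k(n)/k^{2n} = (Σ_{i=1}^{∞} u_i·k^{−2i})^2. -/

import Mathlib

open Classical Finset Filter

/-- A border of `w`: a non-empty word that is both a proper prefix and a suffix of `w`. -/
def IsBorder {k : ℕ} (w b : List (Fin k)) : Prop :=
  b ≠ [] ∧ b ≠ w ∧ b <+: w ∧ b <:+ w

/-- A word is unbordered if it has no border. -/
def Unbordered {k : ℕ} (w : List (Fin k)) : Prop :=
  ∀ b, ¬ IsBorder w b

/-- A right-border of `(u,v)`: a non-empty proper suffix of `u` that is a proper prefix of `v`. -/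
def IsRightBorder {k : ℕ} (u v b : List (Fin k)) : Prop :=
  b ≠ [] ∧ b <:+ u ∧ b ≠ u ∧ b <+: v ∧ b ≠ v

/-- A left-border of `(u,v)`: a non-empty proper prefix of `u` that is a proper suffix of `v`. -/
def IsLeftBorder {k : ℕ} (u v b : List (Fin k)) : Prop :=
  b ≠ [] ∧ b <+: u ∧ b ≠ u ∧ b <:+ v ∧ b ≠ v

def MutuallyBordered {k : ℕ} (u v : List (Fin k)) : Prop :=
  (∃ b, IsRightBorder u v b) ∧ (∃ b, IsLeftBorder u v b)

def MutuallyUnbordered {k : ℕ} (u v : List (Fin k)) : Prop :=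
  (¬ ∃ b, IsRightBorder u v b) ∧ (¬ ∃ b, IsLeftBorder u v b)

def RightBordered {k : ℕ} (u v : List (Fin k)) : Prop :=
  (∃ b, IsRightBorder u v b) ∧ (¬ ∃ b, IsLeftBorder u v b)

/-- `lso u v`: the length of the shortest right-border of `(u,v)`, or `0` if there is none. -/
noncomputable def lso {k : ℕ} (u v : List (Fin k)) : ℕ :=
  sInf {m | ∃ b : List (Fin k), IsRightBorder u v b ∧ b.length = m}

def IsShortestRightBorder {k : ℕ} (u v b : List (Fin k)) : Prop :=
  IsRightBorder u v b ∧ ∀ b', IsRightBorder u v b' → b.length ≤ b'.length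

def IsShortestLeftBorder {k : ℕ} (u v b : List (Fin k)) : Prop :=
  IsLeftBorder u v b ∧ ∀ b', IsLeftBorder u v b' → b.length ≤ b'.length

/-- The finite set of all length-`n` words over `Σ_k`. -/
def Words (k n : ℕ) : Finset (List (Fin k)) :=
  (Finset.univ : Finset (Fin n → Fin k)).image List.ofFn

/-- `UB k n`: the number of unbordered words of length `n` over `Σ_k`. -/
noncomputable def UB (k n : ℕ) : ℕ :=
  ((Words k n).filter Unbordered).card

/-- `M k n`: the number of mutually bordered pairs of length-`n` words over `Σ_k`. -/
noncomputable def M (k n : ℕ) : ℕ :=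
  ((Words k n ×ˢ Words k n).filter (fun p => MutuallyBordered p.1 p.2)).card

/-- `R k n`: the number of right-bordered pairs of length-`n` words over `Σ_k`. -/
noncomputable def R (k n : ℕ) : ℕ :=
  ((Words k n ×ˢ Words k n).filter (fun p => RightBordered p.1 p.2)).card

/-- `U k n`: the number of mutually unbordered pairs of length-`n` words over `Σ_k`. -/
noncomputable def U (k n : ℕ) : ℕ :=
  ((Words k n ×ˢ Words k n).filter (fun p => MutuallyUnbordered p.1 p.2)).card

/-- `G u v m`: the number of unbordered words of length `m` over `Σ_k` having
`u` as a prefix and `v` as a suffix. -/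
noncomputable def G {k : ℕ} (u v : List (Fin k)) (m : ℕ) : ℕ :=
  ((Words k m).filter (fun w => Unbordered w ∧ u <+: w ∧ v <:+ w)).card

section Aux
variable {k : ℕ}

lemma mem_Words {n : ℕ} {w : List (Fin k)} : w ∈ Words k n ↔ w.length = n := by
  constructor
  · intro h
    simp only [Words, Finset.mem_image] at h
    obtain ⟨f, _, rfl⟩ := h
    simp
  · intro h
    subst h
    simp only [Words, Finset.mem_image]
    exact ⟨w.get, Finset.mem_univ _, List.ofFn_get w⟩

lemma card_Words (n : ℕ) : (Words k n).card = k ^ n := by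
  rw [Words, Finset.card_image_of_injective _ List.ofFn_injective]
  simp

lemma filter_prefix_suffix_eq_image (p s : List (Fin k)) {n : ℕ}
    (h : p.length + s.length ≤ n) :
    (Words k n).filter (fun w => p <+: w ∧ s <:+ w)
      = (Words k (n - (p.length + s.length))).image (fun w' => p ++ w' ++ s) := by
  ext w
  simp only [Finset.mem_filter, Finset.mem_image, mem_Words]
  constructor
  · rintro ⟨hlen, ⟨t, rfl⟩, hsuf⟩
    have hlen' : p.length + t.length = n := by simpa [List.length_append] using hlen
    have hst : s <:+ t := by
      refine List.suffix_of_suffix_length_le hsuf ⟨p, rfl⟩ ?_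
      omega
    obtain ⟨w', rfl⟩ := hst
    refine ⟨w', ?_, ?_⟩
    · simp only [List.length_append] at hlen' ⊢
      omega
    · simp [List.append_assoc]
  · rintro ⟨w', hw', rfl⟩
    refine ⟨?_, ⟨w' ++ s, by simp⟩, ⟨p ++ w', rfl⟩⟩
    simp only [List.length_append, hw']
    omega

lemma card_filter_prefix_suffix (p s : List (Fin k)) {n : ℕ}
    (h : p.length + s.length ≤ n) :
    ((Words k n).filter (fun w => p <+: w ∧ s <:+ w)).card = k ^ (n - (p.length + s.length)) := by
  rw [filter_prefix_suffix_eq_image p s h, Finset.card_image_of_injective, card_Words]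
  intro a b hab
  simpa using hab

lemma card_filter_prefix (p : List (Fin k)) {n : ℕ} (h : p.length ≤ n) :
    ((Words k n).filter (fun w => p <+: w)).card = k ^ (n - p.length) := by
  have h2 : (Words k n).filter (fun w => p <+: w ∧ ([] : List (Fin k)) <:+ w)
      = (Words k n).filter (fun w => p <+: w) := by
    apply Finset.filter_congr
    intro w _
    simp
  have := card_filter_prefix_suffix p ([] : List (Fin k)) (n := n) (by simpa)
  rw [h2] at this
  simpa using this

lemma card_filter_suffix (s : List (Fin k)) {n : ℕ} (h : s.length ≤ n) :
    ((Words k n).filter (fun w => s <:+ w)).card = k ^ (n - s.length) := by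
  have h2 : (Words k n).filter (fun w => ([] : List (Fin k)) <+: w ∧ s <:+ w)
      = (Words k n).filter (fun w => s <:+ w) := by
    apply Finset.filter_congr
    intro w _
    simp
  have := card_filter_prefix_suffix ([] : List (Fin k)) s (n := n) (by simpa)
  rw [h2] at this
  simpa using this

lemma unbordered_eq {x y c c' : List (Fin k)} (hc : Unbordered c) (hc' : Unbordered c')
    (hc0 : c ≠ []) (hc0' : c' ≠ []) (h1 : c <+: x) (h2 : c' <+: x) (h3 : c <:+ y)
    (h4 : c' <:+ y) : c = c' := by
  by_contra hne
  rcases le_total c.length c'.length with hle | hle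
  · exact hc' c ⟨hc0, hne, List.prefix_of_prefix_length_le h1 h2 hle,
      List.suffix_of_suffix_length_le h3 h4 hle⟩
  · exact hc c' ⟨hc0', Ne.symm hne, List.prefix_of_prefix_length_le h2 h1 hle,
      List.suffix_of_suffix_length_le h4 h3 hle⟩

lemma exists_unbordered_rb_aux (u v : List (Fin k)) :
    ∀ m, ∀ b : List (Fin k), b.length ≤ m → IsRightBorder u v b →
      ∃ b', Unbordered b' ∧ IsRightBorder u v b' := by
  intro m
  induction m with
  | zero =>
    intro b hb hrb
    exact absurd (List.length_eq_zero_iff.mp (Nat.le_zero.mp hb)) hrb.1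
  | succ m ih =>
    intro b hb hrb
    by_cases hu : Unbordered b
    · exact ⟨b, hu, hrb⟩
    · simp only [Unbordered, not_forall, not_not] at hu
      obtain ⟨c, hc0, hcne, hcp, hcs⟩ := hu
      have hclt : c.length < b.length :=
        lt_of_le_of_ne hcp.length_le (fun h => hcne (hcp.eq_of_length h))
      obtain ⟨hb0, hbsu, hbnu, hbpv, hbnv⟩ := hrb
      have hrc : IsRightBorder u v c := by
        refine ⟨hc0, hcs.trans hbsu, ?_, hcp.trans hbpv, ?_⟩
        · intro h
          have h1 := hbsu.length_le
          rw [← h] at h1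
          omega
        · intro h
          have h1 := hbpv.length_le
          rw [← h] at h1
          omega
      exact ih c (by omega) hrc

lemma exists_unbordered_rb {u v : List (Fin k)} (h : ∃ b, IsRightBorder u v b) :
    ∃ b, Unbordered b ∧ IsRightBorder u v b := by
  obtain ⟨b, hb⟩ := h
  exact exists_unbordered_rb_aux u v b.length b le_rfl hb

end Aux

section Part
variable {k : ℕ}

lemma leftBorder_iff {u v b : List (Fin k)} : IsLeftBorder u v b ↔ IsRightBorder v u b := by
  unfold IsLeftBorder IsRightBorder
  tauto

noncomputable def DF (k n : ℕ) : Finset (List (Fin k)) :=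
  (Finset.range (n - 1)).biUnion (fun i => (Words k (i + 1)).filter Unbordered)

noncomputable def AF (k n : ℕ) (b c : List (Fin k)) : Finset (List (Fin k)) :=
  (Words k n).filter (fun u => c <+: u ∧ b <:+ u)

noncomputable def BF (k n : ℕ) (b c : List (Fin k)) : Finset (List (Fin k)) :=
  (Words k n).filter (fun v => b <+: v ∧ c <:+ v)

lemma mem_DF {n : ℕ} {b : List (Fin k)} :
    b ∈ DF k n ↔ Unbordered b ∧ 1 ≤ b.length ∧ b.length < n := by
  simp only [DF, Finset.mem_biUnion, Finset.mem_range, Finset.mem_filter, mem_Words]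
  constructor
  · rintro ⟨i, hi, hlen, hu⟩
    exact ⟨hu, by omega, by omega⟩
  · rintro ⟨hu, h1, h2⟩
    exact ⟨b.length - 1, by omega, by omega, hu⟩

lemma ne_nil_of_mem_DF {n : ℕ} {b : List (Fin k)} (h : b ∈ DF k n) : b ≠ [] := by
  have := (mem_DF.mp h).2.1
  intro hb
  simp [hb] at this

lemma MB_filter_eq (k n : ℕ) :
    (Words k n ×ˢ Words k n).filter (fun p => MutuallyBordered p.1 p.2)
      = (DF k n ×ˢ DF k n).biUnion (fun bc => AF k n bc.1 bc.2 ×ˢ BF k n bc.1 bc.2) := by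
  ext ⟨u, v⟩
  simp only [Finset.mem_filter, Finset.mem_product, Finset.mem_biUnion, AF, BF, mem_DF,
    Prod.exists]
  constructor
  · rintro ⟨⟨hu, hv⟩, ⟨hrb, hlb⟩⟩
    have hun : u.length = n := mem_Words.mp hu
    have hvn : v.length = n := mem_Words.mp hv
    obtain ⟨b, hbU, hb0, hbsu, hbnu, hbpv, hbnv⟩ := exists_unbordered_rb hrb
    have hlb' : ∃ b, IsRightBorder v u b := by
      obtain ⟨c, hc⟩ := hlb
      exact ⟨c, leftBorder_iff.mp hc⟩
    obtain ⟨c, hcU, hc0, hcsv, hcnv, hcpu, hcnu⟩ := exists_unbordered_rb hlb'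
    refine ⟨b, c, ⟨⟨hbU, ?_, ?_⟩, ⟨hcU, ?_, ?_⟩⟩, ⟨hu, hcpu, hbsu⟩, ⟨hv, hbpv, hcsv⟩⟩
    · exact List.length_pos_iff.mpr hb0
    · have h1 := hbsu.length_le
      have h2 : b.length ≠ u.length := fun h => hbnu (hbsu.eq_of_length h)
      omega
    · exact List.length_pos_iff.mpr hc0
    · have h1 := hcpu.length_le
      have h2 : c.length ≠ u.length := fun h => hcnu (hcpu.eq_of_length h)
      omega
  · rintro ⟨b, c, ⟨⟨hbU, hb1, hbn⟩, ⟨hcU, hc1, hcn⟩⟩, ⟨hu, hcpu, hbsu⟩, ⟨hv, hbpv, hcsv⟩⟩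
    have hun : u.length = n := mem_Words.mp hu
    have hvn : v.length = n := mem_Words.mp hv
    have hb0 : b ≠ [] := by intro h; rw [h] at hb1; simp at hb1
    have hc0 : c ≠ [] := by intro h; rw [h] at hc1; simp at hc1
    refine ⟨⟨hu, hv⟩, ⟨b, hb0, hbsu, ?_, hbpv, ?_⟩, ⟨c, hc0, hcpu, ?_, hcsv, ?_⟩⟩
    · intro h; rw [h] at hbn; omega
    · intro h; rw [h] at hbn; omega
    · intro h; rw [h] at hcn; omega
    · intro h; rw [h] at hcn; omega

lemma pair_disjoint (k n : ℕ) :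
    ∀ bc ∈ DF k n ×ˢ DF k n, ∀ bc' ∈ DF k n ×ˢ DF k n, bc ≠ bc' →
      Disjoint (AF k n bc.1 bc.2 ×ˢ BF k n bc.1 bc.2)
        (AF k n bc'.1 bc'.2 ×ˢ BF k n bc'.1 bc'.2) := by
  rintro ⟨b, c⟩ hbc ⟨b', c'⟩ hbc' hne
  rw [Finset.mem_product] at hbc hbc'
  rw [Finset.disjoint_left]
  rintro ⟨u, v⟩ h1 h2
  simp only [AF, BF, Finset.mem_product, Finset.mem_filter] at h1 h2
  obtain ⟨⟨_, hcpu, hbsu⟩, ⟨_, hbpv, hcsv⟩⟩ := h1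
  obtain ⟨⟨_, hcpu', hbsu'⟩, ⟨_, hbpv', hcsv'⟩⟩ := h2
  have hb : b = b' :=
    unbordered_eq (mem_DF.mp hbc.1).1 (mem_DF.mp hbc'.1).1 (ne_nil_of_mem_DF hbc.1)
      (ne_nil_of_mem_DF hbc'.1) hbpv hbpv' hbsu hbsu'
  have hc : c = c' :=
    unbordered_eq (mem_DF.mp hbc.2).1 (mem_DF.mp hbc'.2).1 (ne_nil_of_mem_DF hbc.2)
      (ne_nil_of_mem_DF hbc'.2) hcpu hcpu' hcsv hcsv'
  exact hne (by rw [hb, hc])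

lemma M_eq (k n : ℕ) :
    M k n = ∑ bc ∈ DF k n ×ˢ DF k n, (AF k n bc.1 bc.2 ×ˢ BF k n bc.1 bc.2).card := by
  rw [M, MB_filter_eq, Finset.card_biUnion (pair_disjoint k n)]

lemma sum_card_le (k n : ℕ) (b : List (Fin k)) (hbn : b.length ≤ n) :
    ∑ c ∈ DF k n, (AF k n b c ×ˢ BF k n b c).card ≤ k ^ (n - b.length) * k ^ (n - b.length) := by
  have hdisj : ∀ c ∈ DF k n, ∀ c' ∈ DF k n, c ≠ c' →
      Disjoint (AF k n b c ×ˢ BF k n b c) (AF k n b c' ×ˢ BF k n b c') := by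
    intro c hc c' hc' hne
    rw [Finset.disjoint_left]
    rintro ⟨u, v⟩ h1 h2
    simp only [AF, BF, Finset.mem_product, Finset.mem_filter] at h1 h2
    exact hne (unbordered_eq (mem_DF.mp hc).1 (mem_DF.mp hc').1 (ne_nil_of_mem_DF hc)
      (ne_nil_of_mem_DF hc') h1.1.2.1 h2.1.2.1 h1.2.2.2 h2.2.2.2)
  rw [← Finset.card_biUnion hdisj]
  have hsub : (DF k n).biUnion (fun c => AF k n b c ×ˢ BF k n b c) ⊆
      ((Words k n).filter (fun u => b <:+ u)) ×ˢ ((Words k n).filter (fun v => b <+: v)) := by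
    apply Finset.biUnion_subset.mpr
    intro c _
    apply Finset.product_subset_product
    · exact Finset.monotone_filter_right _ (fun x _ h => h.2)
    · exact Finset.monotone_filter_right _ (fun x _ h => h.1)
  calc ((DF k n).biUnion (fun c => AF k n b c ×ˢ BF k n b c)).card
      ≤ (((Words k n).filter (fun u => b <:+ u)) ×ˢ
          ((Words k n).filter (fun v => b <+: v))).card := Finset.card_le_card hsub
    _ = k ^ (n - b.length) * k ^ (n - b.length) := by
        rw [Finset.card_product, card_filter_suffix b hbn, card_filter_prefix b hbn]

lemma sum_DF_eq (k n : ℕ) (g : ℕ → ℕ) :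
    ∑ b ∈ DF k n, g b.length = ∑ i ∈ Finset.range (n - 1), UB k (i + 1) * g (i + 1) := by
  rw [DF, Finset.sum_biUnion]
  · apply Finset.sum_congr rfl
    intro i _
    rw [Finset.sum_congr rfl (fun b hb => ?_), Finset.sum_const, smul_eq_mul, UB]
    have : b.length = i + 1 := mem_Words.mp (Finset.mem_filter.mp hb).1
    rw [this]
  · intro i hi j hj hij
    rw [Function.onFun, Finset.disjoint_left]
    intro b h1 h2
    have e1 : b.length = i + 1 := mem_Words.mp (Finset.mem_filter.mp h1).1
    have e2 : b.length = j + 1 := mem_Words.mp (Finset.mem_filter.mp h2).1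
    exact hij (by omega)

lemma card_slice_le (k i : ℕ) : UB k i ≤ k ^ i := by
  calc UB k i ≤ (Words k i).card := Finset.card_filter_le _ _
    _ = k ^ i := card_Words i

end Part

section Est
variable {k : ℕ}

lemma good_card (k n : ℕ) {b c : List (Fin k)} (h : b.length + c.length ≤ n) :
    (AF k n b c ×ˢ BF k n b c).card
      = k ^ (n - (b.length + c.length)) * k ^ (n - (b.length + c.length)) := by
  rw [Finset.card_product, AF, BF, card_filter_prefix_suffix c b (by omega),
    card_filter_prefix_suffix b c h]
  congr 2
  omega

lemma sum_card_le' (k n : ℕ) (c : List (Fin k)) (hcn : c.length ≤ n) :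
    ∑ b ∈ DF k n, (AF k n b c ×ˢ BF k n b c).card ≤ k ^ (n - c.length) * k ^ (n - c.length) := by
  have hdisj : ∀ b ∈ DF k n, ∀ b' ∈ DF k n, b ≠ b' →
      Disjoint (AF k n b c ×ˢ BF k n b c) (AF k n b' c ×ˢ BF k n b' c) := by
    intro b hb b' hb' hne
    rw [Finset.disjoint_left]
    rintro ⟨u, v⟩ h1 h2
    simp only [AF, BF, Finset.mem_product, Finset.mem_filter] at h1 h2
    exact hne (unbordered_eq (mem_DF.mp hb).1 (mem_DF.mp hb').1 (ne_nil_of_mem_DF hb)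
      (ne_nil_of_mem_DF hb') h1.2.2.1 h2.2.2.1 h1.1.2.2 h2.1.2.2)
  rw [← Finset.card_biUnion hdisj]
  have hsub : (DF k n).biUnion (fun b => AF k n b c ×ˢ BF k n b c) ⊆
      ((Words k n).filter (fun u => c <+: u)) ×ˢ ((Words k n).filter (fun v => c <:+ v)) := by
    apply Finset.biUnion_subset.mpr
    intro b _
    apply Finset.product_subset_product
    · exact Finset.monotone_filter_right _ (fun x _ h => h.1)
    · exact Finset.monotone_filter_right _ (fun x _ h => h.2)
  calc ((DF k n).biUnion (fun b => AF k n b c ×ˢ BF k n b c)).card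
      ≤ (((Words k n).filter (fun u => c <+: u)) ×ˢ
          ((Words k n).filter (fun v => c <:+ v))).card := Finset.card_le_card hsub
    _ = k ^ (n - c.length) * k ^ (n - c.length) := by
        rw [Finset.card_product, card_filter_prefix c hcn, card_filter_suffix c hcn]

lemma one_side_bad_le (k n : ℕ) :
    ∑ b ∈ (DF k n).filter (fun b => n / 2 + 1 ≤ b.length),
      (k ^ (n - b.length) * k ^ (n - b.length)) ≤ n * k ^ (2 * n - (n / 2 + 1)) := by
  rw [Finset.sum_filter]
  have h1 : ∑ b ∈ DF k n, (if n / 2 + 1 ≤ b.length then k ^ (n - b.length) * k ^ (n - b.length) else 0)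
      = ∑ i ∈ Finset.range (n - 1), UB k (i + 1) *
        (if n / 2 + 1 ≤ i + 1 then k ^ (n - (i + 1)) * k ^ (n - (i + 1)) else 0) :=
    sum_DF_eq k n (fun L => if n / 2 + 1 ≤ L then k ^ (n - L) * k ^ (n - L) else 0)
  rw [h1]
  have hbound : ∀ i ∈ Finset.range (n - 1),
      UB k (i + 1) * (if n / 2 + 1 ≤ i + 1 then k ^ (n - (i + 1)) * k ^ (n - (i + 1)) else 0)
        ≤ k ^ (2 * n - (n / 2 + 1)) := by
    intro i hi
    rw [Finset.mem_range] at hi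
    split_ifs with hcase
    · calc UB k (i + 1) * (k ^ (n - (i + 1)) * k ^ (n - (i + 1)))
          ≤ k ^ (i + 1) * (k ^ (n - (i + 1)) * k ^ (n - (i + 1))) := by
            exact Nat.mul_le_mul_right _ (card_slice_le k (i + 1))
        _ = k ^ ((i + 1) + ((n - (i + 1)) + (n - (i + 1)))) := by rw [pow_add, pow_add]; ring
        _ ≤ k ^ (2 * n - (n / 2 + 1)) := by
            rcases Nat.eq_zero_or_pos k with hk0 | hk1
            · subst hk0
              simp [Nat.zero_pow]
            · exact Nat.pow_le_pow_right hk1 (by omega)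
    · simp
  calc ∑ i ∈ Finset.range (n - 1), UB k (i + 1) *
        (if n / 2 + 1 ≤ i + 1 then k ^ (n - (i + 1)) * k ^ (n - (i + 1)) else 0)
      ≤ ∑ _i ∈ Finset.range (n - 1), k ^ (2 * n - (n / 2 + 1)) := Finset.sum_le_sum hbound
    _ = (n - 1) * k ^ (2 * n - (n / 2 + 1)) := by rw [Finset.sum_const, smul_eq_mul, Finset.card_range]
    _ ≤ n * k ^ (2 * n - (n / 2 + 1)) := Nat.mul_le_mul_right _ (by omega)

lemma bad_sum_le (k n : ℕ) :
    ∑ bc ∈ (DF k n ×ˢ DF k n).filter (fun bc => ¬ bc.1.length + bc.2.length ≤ n),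
      (AF k n bc.1 bc.2 ×ˢ BF k n bc.1 bc.2).card
      ≤ 2 * (n * k ^ (2 * n - (n / 2 + 1))) := by
  set f : List (Fin k) × List (Fin k) → ℕ :=
    fun bc => (AF k n bc.1 bc.2 ×ˢ BF k n bc.1 bc.2).card with hf
  have hsub : (DF k n ×ˢ DF k n).filter (fun bc => ¬ bc.1.length + bc.2.length ≤ n) ⊆
      ((DF k n).filter (fun b => n / 2 + 1 ≤ b.length) ×ˢ DF k n) ∪
      (DF k n ×ˢ (DF k n).filter (fun c => n / 2 + 1 ≤ c.length)) := by
    rintro ⟨b, c⟩ hbc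
    simp only [Finset.mem_filter, Finset.mem_product, Finset.mem_union] at hbc ⊢
    obtain ⟨⟨hb, hc⟩, hlen⟩ := hbc
    have hbn : b.length < n := (mem_DF.mp hb).2.2
    have hcn : c.length < n := (mem_DF.mp hc).2.2
    by_cases hcase : n / 2 + 1 ≤ b.length
    · exact Or.inl ⟨⟨hb, hcase⟩, hc⟩
    · exact Or.inr ⟨hb, hc, by omega⟩
  calc ∑ bc ∈ (DF k n ×ˢ DF k n).filter (fun bc => ¬ bc.1.length + bc.2.length ≤ n), f bc
      ≤ ∑ bc ∈ ((DF k n).filter (fun b => n / 2 + 1 ≤ b.length) ×ˢ DF k n) ∪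
          (DF k n ×ˢ (DF k n).filter (fun c => n / 2 + 1 ≤ c.length)), f bc := by
        exact Finset.sum_le_sum_of_subset hsub
    _ ≤ (∑ bc ∈ (DF k n).filter (fun b => n / 2 + 1 ≤ b.length) ×ˢ DF k n, f bc) +
        ∑ bc ∈ DF k n ×ˢ (DF k n).filter (fun c => n / 2 + 1 ≤ c.length), f bc :=
        by rw [← Finset.sum_union_inter]; exact Nat.le_add_right _ _
    _ ≤ 2 * (n * k ^ (2 * n - (n / 2 + 1))) := by
        have hA : ∑ bc ∈ (DF k n).filter (fun b => n / 2 + 1 ≤ b.length) ×ˢ DF k n, f bc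
            ≤ n * k ^ (2 * n - (n / 2 + 1)) := by
          rw [Finset.sum_product]
          calc ∑ b ∈ (DF k n).filter (fun b => n / 2 + 1 ≤ b.length), ∑ c ∈ DF k n, f (b, c)
              ≤ ∑ b ∈ (DF k n).filter (fun b => n / 2 + 1 ≤ b.length),
                  (k ^ (n - b.length) * k ^ (n - b.length)) := by
                apply Finset.sum_le_sum
                intro b hb
                have hbn : b.length ≤ n :=
                  le_of_lt (mem_DF.mp (Finset.mem_filter.mp hb).1).2.2
                exact sum_card_le k n b hbn
            _ ≤ n * k ^ (2 * n - (n / 2 + 1)) := one_side_bad_le k n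
        have hB : ∑ bc ∈ DF k n ×ˢ (DF k n).filter (fun c => n / 2 + 1 ≤ c.length), f bc
            ≤ n * k ^ (2 * n - (n / 2 + 1)) := by
          rw [Finset.sum_product_right]
          calc ∑ c ∈ (DF k n).filter (fun c => n / 2 + 1 ≤ c.length), ∑ b ∈ DF k n, f (b, c)
              ≤ ∑ c ∈ (DF k n).filter (fun c => n / 2 + 1 ≤ c.length),
                  (k ^ (n - c.length) * k ^ (n - c.length)) := by
                apply Finset.sum_le_sum
                intro c hc
                have hcn : c.length ≤ n :=
                  le_of_lt (mem_DF.mp (Finset.mem_filter.mp hc).1).2.2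
                exact sum_card_le' k n c hcn
            _ ≤ n * k ^ (2 * n - (n / 2 + 1)) := one_side_bad_le k n
        omega

lemma good_eval (k n : ℕ) :
    ∑ bc ∈ (DF k n ×ˢ DF k n).filter (fun bc => bc.1.length + bc.2.length ≤ n),
      (AF k n bc.1 bc.2 ×ˢ BF k n bc.1 bc.2).card
      = ∑ i ∈ Finset.range (n - 1), UB k (i + 1) * ∑ j ∈ Finset.range (n - 1), UB k (j + 1) *
          (if (i + 1) + (j + 1) ≤ n then
            k ^ (n - ((i + 1) + (j + 1))) * k ^ (n - ((i + 1) + (j + 1))) else 0) := by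
  rw [Finset.sum_filter]
  have step1 : ∑ bc ∈ DF k n ×ˢ DF k n, (if bc.1.length + bc.2.length ≤ n then
      (AF k n bc.1 bc.2 ×ˢ BF k n bc.1 bc.2).card else 0)
      = ∑ bc ∈ DF k n ×ˢ DF k n, (if bc.1.length + bc.2.length ≤ n then
        k ^ (n - (bc.1.length + bc.2.length)) * k ^ (n - (bc.1.length + bc.2.length)) else 0) := by
    apply Finset.sum_congr rfl
    intro bc _
    split_ifs with hcase
    · exact good_card k n hcase
    · rfl
  rw [step1, Finset.sum_product]
  have step2 : ∀ b : List (Fin k), ∑ c ∈ DF k n, (if b.length + c.length ≤ n then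
      k ^ (n - (b.length + c.length)) * k ^ (n - (b.length + c.length)) else 0)
      = ∑ j ∈ Finset.range (n - 1), UB k (j + 1) * (if b.length + (j + 1) ≤ n then
        k ^ (n - (b.length + (j + 1))) * k ^ (n - (b.length + (j + 1))) else 0) := by
    intro b
    exact sum_DF_eq k n (fun L => if b.length + L ≤ n then
      k ^ (n - (b.length + L)) * k ^ (n - (b.length + L)) else 0)
  rw [Finset.sum_congr rfl (fun b _ => step2 b)]
  exact sum_DF_eq k n (fun L => ∑ j ∈ Finset.range (n - 1), UB k (j + 1) *
    (if L + (j + 1) ≤ n then k ^ (n - (L + (j + 1))) * k ^ (n - (L + (j + 1))) else 0))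

end Est

theorem stmt12 (k : ℕ) (hk : 2 ≤ k) :
    Summable (fun i : ℕ => (UB k (i + 1) : ℝ) / (k : ℝ) ^ (2 * (i + 1))) ∧
    Filter.Tendsto (fun n : ℕ => (M k n : ℝ) / (k : ℝ) ^ (2 * n)) Filter.atTop
      (nhds ((∑' i : ℕ, (UB k (i + 1) : ℝ) / (k : ℝ) ^ (2 * (i + 1))) ^ 2)) := by
  have hk0 : (0 : ℝ) < k := by positivity
  have hk1 : (1 : ℝ) < k := by exact_mod_cast hk.trans_lt' one_lt_two
  have hkne : (k : ℝ) ≠ 0 := ne_of_gt hk0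
  set a : ℕ → ℝ := fun i => (UB k (i + 1) : ℝ) / (k : ℝ) ^ (2 * (i + 1)) with ha_def
  have ha_nonneg : ∀ i, 0 ≤ a i := fun i => by positivity
  have hinv0 : (0 : ℝ) ≤ (k : ℝ)⁻¹ := by positivity
  have hinv1 : (k : ℝ)⁻¹ < 1 := inv_lt_one_of_one_lt₀ hk1
  have hale : ∀ i, a i ≤ ((k : ℝ)⁻¹) ^ i := by
    intro i
    have hUB : (UB k (i + 1) : ℝ) ≤ (k : ℝ) ^ (i + 1) := by
      exact_mod_cast card_slice_le k (i + 1)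
    have h1 : a i ≤ (k : ℝ) ^ (i + 1) / (k : ℝ) ^ (2 * (i + 1)) := by
      simp only [ha_def]
      gcongr
    have h2 : (k : ℝ) ^ (i + 1) / (k : ℝ) ^ (2 * (i + 1)) = ((k : ℝ)⁻¹) ^ (i + 1) := by
      have he : (k : ℝ) ^ (2 * (i + 1)) = (k : ℝ) ^ (i + 1) * (k : ℝ) ^ (i + 1) := by
        rw [← pow_add]; congr 1; ring
      rw [he, inv_pow, div_mul_eq_div_div, div_self (pow_ne_zero _ hkne), one_div]
    have h3 : ((k : ℝ)⁻¹) ^ (i + 1) ≤ ((k : ℝ)⁻¹) ^ i :=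
      pow_le_pow_of_le_one hinv0 hinv1.le (by omega)
    linarith [h1, h2.le, h3]
  have hsum : Summable a := by
    apply Summable.of_nonneg_of_le ha_nonneg hale
    exact summable_geometric_of_lt_one hinv0 hinv1
  refine ⟨hsum, ?_⟩
  set S : ℝ := ∑' i, a i with hS_def
  have hS : HasSum a S := hsum.hasSum
  have hF : HasSum (fun p : ℕ × ℕ => a p.1 * a p.2) (S * S) :=
    hS.mul hS (hsum.mul_of_nonneg hsum ha_nonneg ha_nonneg)
  set Gfin : ℕ → Finset (ℕ × ℕ) := fun n =>
    ((Finset.range (n - 1)) ×ˢ (Finset.range (n - 1))).filter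
      (fun p => (p.1 + 1) + (p.2 + 1) ≤ n) with hGfin_def
  have hGmono : Monotone Gfin := by
    intro n n' hnn p hp
    simp only [hGfin_def, Finset.mem_filter, Finset.mem_product, Finset.mem_range] at hp ⊢
    omega
  have hGexh : ∀ p : ℕ × ℕ, ∃ n, p ∈ Gfin n := by
    intro p
    refine ⟨p.1 + p.2 + 3, ?_⟩
    simp only [hGfin_def, Finset.mem_filter, Finset.mem_product, Finset.mem_range]
    omega
  have htendG : Tendsto Gfin atTop atTop := tendsto_atTop_finset_of_monotone hGmono hGexh
  have hgood_tend : Tendsto (fun n => ∑ p ∈ Gfin n, a p.1 * a p.2) atTop (nhds (S * S)) := by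
    have hF' : Tendsto (fun s : Finset (ℕ × ℕ) => ∑ p ∈ s, a p.1 * a p.2) atTop (nhds (S * S)) := hF
    exact hF'.comp htendG
  -- identify the good sum
  have hkey : ∀ n : ℕ,
      ((∑ bc ∈ (DF k n ×ˢ DF k n).filter (fun bc => bc.1.length + bc.2.length ≤ n),
        (AF k n bc.1 bc.2 ×ˢ BF k n bc.1 bc.2).card : ℕ) : ℝ)
        = (k : ℝ) ^ (2 * n) * ∑ p ∈ Gfin n, a p.1 * a p.2 := by
    intro n
    rw [good_eval k n]
    have hrhs : ∑ p ∈ Gfin n, a p.1 * a p.2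
        = ∑ i ∈ Finset.range (n - 1), ∑ j ∈ Finset.range (n - 1),
            (if (i + 1) + (j + 1) ≤ n then a i * a j else 0) := by
      rw [hGfin_def]
      rw [Finset.sum_filter, Finset.sum_product]
    rw [hrhs, Finset.mul_sum]
    push_cast
    apply Finset.sum_congr rfl
    intro i _
    rw [Finset.mul_sum, Finset.mul_sum]
    apply Finset.sum_congr rfl
    intro j _
    split_ifs with hcase
    · have hpow : (k : ℝ) ^ (n - ((i + 1) + (j + 1))) * (k : ℝ) ^ (n - ((i + 1) + (j + 1))) *
          ((k : ℝ) ^ (2 * (i + 1)) * (k : ℝ) ^ (2 * (j + 1))) = (k : ℝ) ^ (2 * n) := by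
        rw [← pow_add, ← pow_add, ← pow_add]
        congr 1
        omega
      rw [← hpow]
      simp only [ha_def]
      field_simp
    · simp
  -- lower bound
  have hgood_le : ∀ n : ℕ,
      ∑ bc ∈ (DF k n ×ˢ DF k n).filter (fun bc => bc.1.length + bc.2.length ≤ n),
        (AF k n bc.1 bc.2 ×ˢ BF k n bc.1 bc.2).card ≤ M k n := by
    intro n
    rw [M_eq k n]
    exact Finset.sum_le_sum_of_subset (Finset.filter_subset _ _)
  have hlower : ∀ n : ℕ, ∑ p ∈ Gfin n, a p.1 * a p.2 ≤ (M k n : ℝ) / (k : ℝ) ^ (2 * n) := by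
    intro n
    rw [le_div_iff₀ (by positivity)]
    calc (∑ p ∈ Gfin n, a p.1 * a p.2) * (k : ℝ) ^ (2 * n)
        = ((∑ bc ∈ (DF k n ×ˢ DF k n).filter (fun bc => bc.1.length + bc.2.length ≤ n),
            (AF k n bc.1 bc.2 ×ˢ BF k n bc.1 bc.2).card : ℕ) : ℝ) := by rw [hkey n]; ring
      _ ≤ (M k n : ℝ) := by exact_mod_cast hgood_le n
  -- upper bound
  have hupper : ∀ n : ℕ, 1 ≤ n → (M k n : ℝ) / (k : ℝ) ^ (2 * n)
      ≤ (∑ p ∈ Gfin n, a p.1 * a p.2) + 2 * (n : ℝ) * ((k : ℝ)⁻¹) ^ (n / 2 + 1) := by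
    intro n hn
    have hsplit : M k n = (∑ bc ∈ (DF k n ×ˢ DF k n).filter
          (fun bc => bc.1.length + bc.2.length ≤ n),
          (AF k n bc.1 bc.2 ×ˢ BF k n bc.1 bc.2).card)
        + ∑ bc ∈ (DF k n ×ˢ DF k n).filter (fun bc => ¬ bc.1.length + bc.2.length ≤ n),
          (AF k n bc.1 bc.2 ×ˢ BF k n bc.1 bc.2).card := by
      rw [M_eq k n, Finset.sum_filter_add_sum_filter_not]
    have hMle : (M k n : ℝ) ≤ (k : ℝ) ^ (2 * n) * (∑ p ∈ Gfin n, a p.1 * a p.2)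
        + 2 * (n : ℝ) * (k : ℝ) ^ (2 * n - (n / 2 + 1)) := by
      rw [hsplit, Nat.cast_add, hkey n]
      gcongr
      calc ((∑ bc ∈ (DF k n ×ˢ DF k n).filter (fun bc => ¬ bc.1.length + bc.2.length ≤ n),
          (AF k n bc.1 bc.2 ×ˢ BF k n bc.1 bc.2).card : ℕ) : ℝ)
          ≤ ((2 * (n * k ^ (2 * n - (n / 2 + 1))) : ℕ) : ℝ) := by
            exact_mod_cast bad_sum_le k n
        _ = 2 * (n : ℝ) * (k : ℝ) ^ (2 * n - (n / 2 + 1)) := by push_cast; ring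
    rw [div_le_iff₀ (by positivity)]
    calc (M k n : ℝ) ≤ (k : ℝ) ^ (2 * n) * (∑ p ∈ Gfin n, a p.1 * a p.2)
        + 2 * (n : ℝ) * (k : ℝ) ^ (2 * n - (n / 2 + 1)) := hMle
      _ = ((∑ p ∈ Gfin n, a p.1 * a p.2) + 2 * (n : ℝ) * ((k : ℝ)⁻¹) ^ (n / 2 + 1))
          * (k : ℝ) ^ (2 * n) := by
        have hexp : (2 * n - (n / 2 + 1)) + (n / 2 + 1) = 2 * n := by omega
        have : (k : ℝ) ^ (2 * n) = (k : ℝ) ^ (2 * n - (n / 2 + 1)) * (k : ℝ) ^ (n / 2 + 1) := by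
          rw [← pow_add, hexp]
        rw [this]
        rw [inv_pow]
        field_simp
  -- the error term tends to zero
  have herr : Tendsto (fun n : ℕ => 2 * (n : ℝ) * ((k : ℝ)⁻¹) ^ (n / 2 + 1)) atTop (nhds 0) := by
    have hg : Tendsto (fun q : ℕ => 4 * ((q : ℝ) * ((k : ℝ)⁻¹) ^ q)) atTop (nhds 0) := by
      have hs : Summable (fun q : ℕ => (q : ℝ) ^ 1 * ((k : ℝ)⁻¹) ^ q) := by
        apply summable_pow_mul_geometric_of_norm_lt_one
        rw [norm_inv, Real.norm_natCast]
        exact inv_lt_one_of_one_lt₀ hk1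
      have h0 : Tendsto (fun q : ℕ => (q : ℝ) ^ 1 * ((k : ℝ)⁻¹) ^ q) atTop (nhds 0) :=
        hs.tendsto_atTop_zero
      have := h0.const_mul (4 : ℝ)
      simp only [mul_zero] at this
      simpa [pow_one] using this
    have hq : Tendsto (fun n : ℕ => n / 2 + 1) atTop atTop := by
      apply tendsto_atTop_atTop.mpr
      intro b
      exact ⟨2 * b, fun n hn => by omega⟩
    have hcomp := hg.comp hq
    apply squeeze_zero (fun n => by positivity) ?_ hcomp
    intro n
    simp only [Function.comp_apply]
    have h1 : (2 : ℝ) * n ≤ 4 * ((n / 2 + 1 : ℕ) : ℝ) := by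
      have : (n : ℝ) ≤ 2 * ((n / 2 + 1 : ℕ) : ℝ) := by
        have : n ≤ 2 * (n / 2 + 1) := by omega
        exact_mod_cast this
      linarith
    calc 2 * (n : ℝ) * ((k : ℝ)⁻¹) ^ (n / 2 + 1)
        ≤ 4 * ((n / 2 + 1 : ℕ) : ℝ) * ((k : ℝ)⁻¹) ^ (n / 2 + 1) := by
          apply mul_le_mul_of_nonneg_right h1 (by positivity)
      _ = 4 * (((n / 2 + 1 : ℕ) : ℝ) * ((k : ℝ)⁻¹) ^ (n / 2 + 1)) := by ring
  have hupper_tend : Tendsto (fun n : ℕ => (∑ p ∈ Gfin n, a p.1 * a p.2)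
      + 2 * (n : ℝ) * ((k : ℝ)⁻¹) ^ (n / 2 + 1)) atTop (nhds (S * S)) := by
    have := hgood_tend.add herr
    simpa using this
  have hfinal : Tendsto (fun n : ℕ => (M k n : ℝ) / (k : ℝ) ^ (2 * n)) atTop (nhds (S * S)) := by
    apply tendsto_of_tendsto_of_tendsto_of_le_of_le' hgood_tend hupper_tend
    · exact Filter.Eventually.of_forall hlower
    · filter_upwards [Filter.eventually_ge_atTop 1] with n hn
      exact hupper n hn
  rw [sq]
  exact hfinal
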